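/- If the random vector (P_1,...,P_K) of standard uniform random variables is weakly negatively dependent, then P(S_K(P) ≤ α) ≤ 3.4·α for all α ∈ (0,1). -/

import Mathlib

open MeasureTheory


/-- The Simes function applied to the values `p i`, `i ∈ A`:
`min over k of (|A|/k) · (k-th smallest value)`. -/
noncomputable def simesOn {ι : Type*} (A : Finset ι) (p : ι → ℝ) : ℝ :=
  if h : A.Nonempty then
    ((Finset.range A.card).image fun j =>
      (A.card : ℝ) / (j + 1) * ((A.val.map p).sort (· ≤ ·)).getD j 0).min'
      ((Finset.nonempty_range_iff.mpr (Finset.card_ne_zero.mpr h)).image _)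
  else 0

section SimesAux
open Real Nat Finset

lemma sorted_count {L : List ℝ} (hs : L.Pairwise (· ≤ ·)) {j : ℕ} (hj : j < L.length) :
    j + 1 ≤ L.countP (fun y => decide (y ≤ L.get ⟨j, hj⟩)) := by
  have hsub : (L.take (j+1)).Sublist L := List.take_sublist _ _
  have h1 : (L.take (j+1)).countP (fun y => decide (y ≤ L.get ⟨j, hj⟩)) = (L.take (j+1)).length := by
    apply List.countP_eq_length.mpr
    intro a ha
    simp only [decide_eq_true_eq]
    obtain ⟨i, hi, rfl⟩ := List.mem_take_iff_getElem.mp ha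
    have : L.get ⟨i, by omega⟩ ≤ L.get ⟨j, hj⟩ := hs.rel_get_of_le (by simp; omega)
    simpa using this
  have h2 := hsub.countP_le (p := fun y => decide (y ≤ L.get ⟨j, hj⟩))
  rw [h1] at h2
  rwa [List.length_take, min_eq_left (by omega)] at h2

lemma simes_exists_subset {K : ℕ} (hK : 0 < K) (p : Fin K → ℝ) (α : ℝ)
    (h : simesOn Finset.univ p ≤ α) :
    ∃ k ∈ Finset.range K, ∃ A : Finset (Fin K), A.card = k + 1 ∧
      ∀ i ∈ A, p i ≤ (k + 1) * α / K := by
  classical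
  have hne : (Finset.univ : Finset (Fin K)).Nonempty := ⟨⟨0, hK⟩, Finset.mem_univ _⟩
  rw [simesOn, dif_pos hne] at h
  set L : List ℝ := ((Finset.univ.val.map p).sort (· ≤ ·)) with hL
  have hcard : (Finset.univ : Finset (Fin K)).card = K := by simp
  have hlen : L.length = K := by simp [hL, Multiset.length_sort]
  -- extract j with value ≤ α
  have hmem := Finset.min'_mem ((Finset.range (Finset.univ : Finset (Fin K)).card).image
      fun j => ((Finset.univ : Finset (Fin K)).card : ℝ) / (j + 1) * L.getD j 0)
      (((Finset.nonempty_range_iff.mpr (Finset.card_ne_zero.mpr hne)).image _))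
  rw [Finset.mem_image] at hmem
  obtain ⟨j, hjmem, hjval⟩ := hmem
  rw [Finset.mem_range, hcard] at hjmem
  rw [← hjval] at h
  rw [hcard] at h
  have hKpos : (0:ℝ) < K := by exact_mod_cast hK
  have hj1 : (0:ℝ) < (j:ℝ) + 1 := by positivity
  have hx : L.getD j 0 ≤ ((j:ℝ)+1) * α / K := by
    rw [le_div_iff₀ hKpos]
    calc L.getD j 0 * K = ((j:ℝ)+1) * ((K / ((j:ℝ)+1)) * L.getD j 0) := by field_simp
      _ ≤ ((j:ℝ)+1) * α := by exact mul_le_mul_of_nonneg_left h hj1.le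
  -- count argument
  have hjlen : j < L.length := by omega
  have hgetD : L.getD j 0 = L.get ⟨j, hjlen⟩ := by
    rw [List.getD_eq_getElem?_getD, List.getElem?_eq_getElem hjlen]; rfl
  set x := L.get ⟨j, hjlen⟩ with hxdef
  have hcnt : j + 1 ≤ L.countP (fun y => decide (y ≤ x)) :=
    sorted_count (Multiset.pairwise_sort _ _) hjlen
  have hfil : (Finset.univ.filter (fun i => p i ≤ x)).card = L.countP (fun y => decide (y ≤ x)) := by
    have h2 : (Finset.univ.val.map p) = (L : Multiset ℝ) := (Multiset.sort_eq _ _).symm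
    calc (Finset.univ.filter (fun i => p i ≤ x)).card
        = Multiset.card (Finset.univ.val.filter (fun i => p i ≤ x)) := rfl
      _ = Multiset.countP (fun y => y ≤ x) (Finset.univ.val.map p) :=
          (Multiset.countP_map p Finset.univ.val (fun y => y ≤ x)).symm
      _ = Multiset.countP (fun y => y ≤ x) (L : Multiset ℝ) := by rw [h2]
      _ = L.countP (fun y => decide (y ≤ x)) := Multiset.coe_countP _ _
  have hcard' : j + 1 ≤ (Finset.univ.filter (fun i => p i ≤ x)).card := by
    rw [hfil]; exact hcnt
  obtain ⟨A, hAsub, hAcard⟩ := Finset.exists_subset_card_eq hcard'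
  refine ⟨j, Finset.mem_range.mpr hjmem, A, hAcard, fun i hi => ?_⟩
  have := Finset.mem_filter.mp (hAsub hi)
  calc p i ≤ x := this.2
    _ = L.getD j 0 := hgetD.symm
    _ ≤ ((j:ℝ)+1) * α / K := hx


lemma sqrt_pi_le_stirlingSeq (n : ℕ) : Real.sqrt π ≤ Stirling.stirlingSeq (n + 1) := by
  refine le_of_tendsto Stirling.tendsto_stirlingSeq_sqrt_pi ?_
  filter_upwards [Filter.eventually_ge_atTop (n + 1)] with m hm
  have : m = (m - 1) + 1 := by omega
  rw [this]
  exact Stirling.stirlingSeq'_antitone (by omega : n ≤ m - 1)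

lemma factorial_stirling_lb (n : ℕ) (hn : 1 ≤ n) :
    Real.sqrt π * (Real.sqrt (2 * n) * ((n : ℝ) / Real.exp 1) ^ n) ≤ (n ! : ℝ) := by
  obtain ⟨m, rfl⟩ := Nat.exists_eq_succ_of_ne_zero (by omega : n ≠ 0)
  have h := sqrt_pi_le_stirlingSeq m
  rw [Stirling.stirlingSeq] at h
  have hpos : (0:ℝ) < Real.sqrt (2 * ((m+1 : ℕ) : ℝ)) * (((m+1 : ℕ) : ℝ) / Real.exp 1) ^ (m+1) := by
    have : (0:ℝ) < ((m+1 : ℕ) : ℝ) := by positivity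
    positivity
  rw [le_div_iff₀ hpos] at h
  exact_mod_cast h

lemma term_bound (K k : ℕ) (hkK : k < K) (α : ℝ) (hα : 0 ≤ α) :
    (K.choose (k+1) : ℝ) * (((k:ℝ)+1) * α / K) ^ (k+1) ≤
      (Real.exp 1 * α) ^ (k+1) / (Real.sqrt π * Real.sqrt (2 * ((k:ℝ)+1))) := by
  have hm1 : ((k+1 : ℕ) : ℝ) = (k:ℝ)+1 := by push_cast; ring
  have hKpos : (0:ℝ) < K := by exact_mod_cast Nat.lt_of_lt_of_le (Nat.zero_lt_succ k) hkK
  have h1 : (K.choose (k+1) : ℝ) ≤ (K:ℝ)^(k+1) / (k+1)! := Nat.choose_le_pow_div (k+1) K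
  have hfac := factorial_stirling_lb (k+1) (by omega)
  rw [hm1] at hfac
  have hxpow : (0:ℝ) ≤ (((k:ℝ)+1) * α / K) ^ (k+1) := by positivity
  have step1 : (K.choose (k+1) : ℝ) * (((k:ℝ)+1) * α / K) ^ (k+1)
      ≤ ((K:ℝ)^(k+1) / (k+1)!) * (((k:ℝ)+1) * α / K) ^ (k+1) :=
    mul_le_mul_of_nonneg_right h1 hxpow
  have step2 : ((K:ℝ)^(k+1) / (k+1)!) * (((k:ℝ)+1) * α / K) ^ (k+1)
      = ((k:ℝ)+1)^(k+1) * α^(k+1) / (k+1)! := by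
    rw [div_pow, mul_pow]
    have : ((k+1)! : ℝ) ≠ 0 := by positivity
    field_simp
  have hdenpos : (0:ℝ) < Real.sqrt π * (Real.sqrt (2 * ((k:ℝ)+1)) * (((k:ℝ)+1) / Real.exp 1) ^ (k+1)) := by
    have h0 : (0:ℝ) < (k:ℝ)+1 := by positivity
    have hπ : (0:ℝ) < π := Real.pi_pos
    positivity
  have step3 : ((k:ℝ)+1)^(k+1) * α^(k+1) / ((k+1)! : ℝ)
      ≤ ((k:ℝ)+1)^(k+1) * α^(k+1) /
        (Real.sqrt π * (Real.sqrt (2 * ((k:ℝ)+1)) * (((k:ℝ)+1) / Real.exp 1) ^ (k+1))) := by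
    apply div_le_div_of_nonneg_left (by positivity) hdenpos hfac
  have step4 : ((k:ℝ)+1)^(k+1) * α^(k+1) /
        (Real.sqrt π * (Real.sqrt (2 * ((k:ℝ)+1)) * (((k:ℝ)+1) / Real.exp 1) ^ (k+1)))
      = (Real.exp 1 * α) ^ (k+1) / (Real.sqrt π * Real.sqrt (2 * ((k:ℝ)+1))) := by
    have h0 : ((k:ℝ)+1)^(k+1) ≠ 0 := by positivity
    have he : Real.exp 1 ≠ 0 := (Real.exp_pos 1).ne'
    have hsq1 : Real.sqrt π ≠ 0 := by
      have := Real.pi_pos; positivity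
    have hsq2 : Real.sqrt (2 * ((k:ℝ)+1)) ≠ 0 := by positivity
    rw [div_pow, mul_pow]
    field_simp
  linarith [step1, step2 ▸ step1, step3, step4 ▸ step3]

lemma numeric_aux (x : ℝ) (h0 : 0 ≤ x) (h1 : x ≤ 0.7995) :
    0.399*x + 0.2822*x^2 + 0.2304*x^3 + 0.1995*x^4 + 0.8908*x^5 ≤ 1.25078*x := by
  have h2 : x^2 ≤ 0.7995 * x := by nlinarith
  have h3 : x^3 ≤ 0.7995 * x^2 := by nlinarith
  have h4 : x^4 ≤ 0.7995 * x^3 := by nlinarith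
  have h5 : x^5 ≤ 0.7995 * x^4 := by nlinarith
  linarith

set_option maxHeartbeats 1000000 in
lemma real_sum_bound (K : ℕ) (hK : 0 < K) (α : ℝ) (hα0 : 0 < α) (hα : α ≤ 5/17) :
    ∑ k ∈ Finset.range K, (K.choose (k+1) : ℝ) * (((k:ℝ)+1) * α / K)^(k+1) ≤ 3.4 * α := by
  have he_lb : (2.7182818:ℝ) ≤ Real.exp 1 := by
    have := Real.exp_one_gt_d9; linarith
  have he_ub : Real.exp 1 ≤ 2.7182819 := by
    have := Real.exp_one_lt_d9; linarith
  set x := Real.exp 1 * α with hxdef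
  have hx0 : 0 ≤ x := by positivity
  have hx1 : x ≤ 0.7995 := by
    rw [hxdef]
    have h1 : Real.exp 1 * α ≤ 2.7182819 * α := mul_le_mul_of_nonneg_right he_ub hα0.le
    have h2 : (2.7182819:ℝ) * α ≤ 2.7182819 * (5/17) :=
      mul_le_mul_of_nonneg_left hα (by norm_num)
    linarith
  have hπ := Real.pi_gt_d6
  have hsπ : (1.7724:ℝ) ≤ Real.sqrt π := by
    rw [Real.le_sqrt (by norm_num) (by linarith)]; nlinarith
  set g : ℕ → ℝ := fun k => x^(k+1) / (Real.sqrt π * Real.sqrt (2*((k:ℝ)+1))) with hgdef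
  have hg0 : ∀ k, 0 ≤ g k := fun k =>
    div_nonneg (pow_nonneg hx0 _) (mul_nonneg (Real.sqrt_nonneg _) (Real.sqrt_nonneg _))
  have key : ∀ (m : ℕ) (c d : ℝ), 0 < d → 1 ≤ c * d → x^m / d ≤ c * x^m := by
    intro m c d hd hcd
    rw [div_le_iff₀ hd]
    have hp := pow_nonneg hx0 m
    nlinarith
  have hsqrt : ∀ (a b : ℝ), 0 ≤ b → 0 ≤ a → a^2 ≤ b → a ≤ Real.sqrt b := by
    intro a b hb ha h; rw [Real.le_sqrt ha hb]; exact h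
  have hs2 : (1.4142:ℝ) ≤ Real.sqrt 2 := hsqrt _ _ (by norm_num) (by norm_num) (by norm_num)
  have hs3 : (1.7320:ℝ) ≤ Real.sqrt 3 := hsqrt _ _ (by norm_num) (by norm_num) (by norm_num)
  have hs4 : (2:ℝ) ≤ Real.sqrt 4 := hsqrt _ _ (by norm_num) (by norm_num) (by norm_num)
  have hs6 : (2.4494:ℝ) ≤ Real.sqrt 6 := hsqrt _ _ (by norm_num) (by norm_num) (by norm_num)
  have hs8 : (2.8284:ℝ) ≤ Real.sqrt 8 := hsqrt _ _ (by norm_num) (by norm_num) (by norm_num)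
  have hs10 : (3.1622:ℝ) ≤ Real.sqrt 10 := hsqrt _ _ (by norm_num) (by norm_num) (by norm_num)
  have hsπ0 : (0:ℝ) < Real.sqrt π := by linarith
  -- term-wise bound
  have hterm : ∀ k ∈ Finset.range K, (K.choose (k+1) : ℝ) * (((k:ℝ)+1) * α / K)^(k+1) ≤ g k :=
    fun k hk => term_bound K k (Finset.mem_range.mp hk) α hα0.le
  have step1 : ∑ k ∈ Finset.range K, (K.choose (k+1) : ℝ) * (((k:ℝ)+1) * α / K)^(k+1)
      ≤ ∑ k ∈ Finset.range K, g k := Finset.sum_le_sum hterm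
  set N := max K 4 with hN
  have step2 : ∑ k ∈ Finset.range K, g k ≤ ∑ k ∈ Finset.range N, g k :=
    Finset.sum_le_sum_of_subset_of_nonneg
      (Finset.range_subset_range.mpr (le_max_left _ _)) (fun i _ _ => hg0 i)
  have hsplit : ∑ k ∈ Finset.range N, g k
      = ∑ k ∈ Finset.range 4, g k + ∑ k ∈ Finset.Ico 4 N, g k := by
    rw [Finset.range_eq_Ico]
    exact (Finset.sum_Ico_consecutive g (Nat.zero_le 4) (le_max_right K 4)).symm
  -- head bounds
  have hg0b : g 0 ≤ 0.399 * x^1 := by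
    have : g 0 = x^1 / (Real.sqrt π * Real.sqrt 2) := by norm_num [hgdef]
    rw [this]
    exact key 1 _ _ (by positivity)
      (by nlinarith [mul_le_mul hsπ hs2 (by norm_num : (0:ℝ) ≤ 1.4142) (Real.sqrt_nonneg π)])
  have hg1b : g 1 ≤ 0.2822 * x^2 := by
    have : g 1 = x^2 / (Real.sqrt π * 2) := by norm_num [hgdef]
    rw [this]
    exact key 2 _ _ (by positivity) (by nlinarith [hsπ])
  have hg2b : g 2 ≤ 0.2304 * x^3 := by
    have heq : g 2 = x^3 / (Real.sqrt π * (Real.sqrt 2 * Real.sqrt 3)) := by norm_num [hgdef]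
    rw [heq]
    have h23 : (1.4142:ℝ)*1.7320 ≤ Real.sqrt 2 * Real.sqrt 3 :=
      mul_le_mul hs2 hs3 (by norm_num) (Real.sqrt_nonneg 2)
    exact key 3 _ _ (by positivity)
      (by nlinarith [mul_le_mul hsπ h23 (by norm_num : (0:ℝ) ≤ 1.4142*1.7320) (Real.sqrt_nonneg π)])
  have hg3b : g 3 ≤ 0.1995 * x^4 := by
    have heq : g 3 = x^4 / (Real.sqrt π * (Real.sqrt 2 * Real.sqrt 4)) := by norm_num [hgdef]
    rw [heq]
    have h24 : (1.4142:ℝ)*2 ≤ Real.sqrt 2 * Real.sqrt 4 :=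
      mul_le_mul hs2 hs4 (by norm_num) (Real.sqrt_nonneg 2)
    exact key 4 _ _ (by positivity)
      (by nlinarith [mul_le_mul hsπ h24 (by norm_num : (0:ℝ) ≤ 1.4142*2) (Real.sqrt_nonneg π)])
  have hhead : ∑ k ∈ Finset.range 4, g k
      ≤ 0.399 * x^1 + 0.2822 * x^2 + 0.2304 * x^3 + 0.1995 * x^4 := by
    rw [Finset.sum_range_succ, Finset.sum_range_succ, Finset.sum_range_succ,
      Finset.sum_range_succ, Finset.sum_range_zero]
    linarith
  -- tail bound
  have htail1 : ∀ k ∈ Finset.Ico 4 N, g k ≤ 0.1785 * x^(k+1) := by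
    intro k hk
    obtain ⟨hk4, -⟩ := Finset.mem_Ico.mp hk
    have h10 : (3.1622:ℝ) ≤ Real.sqrt (2*((k:ℝ)+1)) := by
      refine le_trans hs10 (Real.sqrt_le_sqrt ?_)
      have : (4:ℝ) ≤ (k:ℝ) := by exact_mod_cast hk4
      linarith
    exact key (k+1) _ _ (by positivity)
      (by nlinarith [mul_le_mul hsπ h10 (by norm_num : (0:ℝ) ≤ 3.1622) (Real.sqrt_nonneg π)])
  have htail2 : ∑ k ∈ Finset.Ico 4 N, g k ≤ 0.1785 * ∑ k ∈ Finset.Ico 4 N, x^(k+1) := by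
    rw [Finset.mul_sum]
    exact Finset.sum_le_sum htail1
  have hgeom : ∑ k ∈ Finset.Ico 4 N, x^(k+1) ≤ 4.99 * x^5 := by
    have h1 : ∑ k ∈ Finset.Ico 4 N, x^(k+1) = x * ∑ k ∈ Finset.Ico 4 N, x^k := by
      rw [Finset.mul_sum]; exact Finset.sum_congr rfl (fun k _ => by ring)
    have h2 : ∑ k ∈ Finset.Ico 4 N, x^k ≤ x^4 / (1-x) :=
      geom_sum_Ico_le_of_lt_one hx0 (by linarith)
    have h3 : x^4 / (1-x) ≤ 4.99 * x^4 := by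
      rw [div_le_iff₀ (by linarith)]
      have hp := pow_nonneg hx0 4
      nlinarith
    calc ∑ k ∈ Finset.Ico 4 N, x^(k+1) = x * ∑ k ∈ Finset.Ico 4 N, x^k := h1
      _ ≤ x * (4.99 * x^4) := by
          apply mul_le_mul_of_nonneg_left (le_trans h2 h3) hx0
      _ = 4.99 * x^5 := by ring
  have hnum := numeric_aux x hx0 hx1
  have hfin : (1.25078:ℝ) * x ≤ 3.4 * α := by
    rw [hxdef]
    have h1 : Real.exp 1 * α ≤ 2.7182819 * α := mul_le_mul_of_nonneg_right he_ub hα0.le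
    linarith
  calc ∑ k ∈ Finset.range K, (K.choose (k+1) : ℝ) * (((k:ℝ)+1) * α / K)^(k+1)
      ≤ ∑ k ∈ Finset.range N, g k := le_trans step1 step2
    _ = ∑ k ∈ Finset.range 4, g k + ∑ k ∈ Finset.Ico 4 N, g k := hsplit
    _ ≤ (0.399 * x^1 + 0.2822 * x^2 + 0.2304 * x^3 + 0.1995 * x^4) + 0.1785 * (4.99 * x^5) := by
        have := le_trans htail2 (mul_le_mul_of_nonneg_left hgeom (by norm_num))
        linarith
    _ ≤ 1.25078 * x := by
        have hp5 := pow_nonneg hx0 5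
        linarith [hnum]
    _ ≤ 3.4 * α := hfin

end SimesAux

/-- If standard uniform p-values `P₁,…,P_K` are weakly negatively dependent, then
`P(S_K(P) ≤ α) ≤ 3.4 α` for all `α ∈ (0, 1)`. -/
theorem simes_wnd_mult_bound {Ω : Type*} [MeasurableSpace Ω] (μ : Measure Ω)
    [IsProbabilityMeasure μ] (K : ℕ) (hK : 0 < K) (P : Fin K → Ω → ℝ)
    (hunif : ∀ k, ∀ x ∈ Set.Icc (0 : ℝ) 1, μ {ω | P k ω ≤ x} = ENNReal.ofReal x)
    (hwnd : ∀ (A : Finset (Fin K)) (x : ℝ),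
      μ (⋂ k ∈ A, {ω | P k ω ≤ x}) ≤ ∏ k ∈ A, μ {ω | P k ω ≤ x})
    (α : ℝ) (hα : α ∈ Set.Ioo (0 : ℝ) 1) :
    μ {ω | simesOn Finset.univ (fun k => P k ω) ≤ α} ≤ ENNReal.ofReal (3.4 * α) := by
  obtain ⟨hα0, hα1⟩ := hα
  rcases le_or_gt 1 (3.4 * α) with htriv | hsmall
  · calc μ {ω | simesOn Finset.univ (fun k => P k ω) ≤ α} ≤ 1 := prob_le_one
      _ = ENNReal.ofReal 1 := ENNReal.ofReal_one.symm
      _ ≤ ENNReal.ofReal (3.4 * α) := ENNReal.ofReal_le_ofReal htriv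
  have hα' : α ≤ 5/17 := by linarith
  have hreal := real_sum_bound K hK α hα0 hα'
  have hsub : {ω | simesOn Finset.univ (fun k => P k ω) ≤ α} ⊆
      ⋃ k ∈ Finset.range K, ⋃ A ∈ Finset.powersetCard (k+1) (Finset.univ : Finset (Fin K)),
        ⋂ i ∈ A, {ω | P i ω ≤ ((k:ℝ)+1) * α / K} := by
    intro ω hω
    obtain ⟨k, hk, A, hAcard, hA⟩ := simes_exists_subset hK (fun i => P i ω) α hω
    refine Set.mem_iUnion₂.mpr ⟨k, hk, ?_⟩
    refine Set.mem_iUnion₂.mpr ⟨A, Finset.mem_powersetCard.mpr ⟨Finset.subset_univ _, hAcard⟩, ?_⟩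
    exact Set.mem_iInter₂.mpr fun i hi => hA i hi
  have hx01 : ∀ k ∈ Finset.range K, ((k:ℝ)+1) * α / K ∈ Set.Icc (0:ℝ) 1 := by
    intro k hk
    have hkK := Finset.mem_range.mp hk
    have hKpos : (0:ℝ) < K := by positivity
    constructor
    · positivity
    · rw [div_le_one hKpos]
      have h1 : ((k:ℝ)+1) ≤ K := by exact_mod_cast hkK
      nlinarith
  calc μ {ω | simesOn Finset.univ (fun k => P k ω) ≤ α}
      ≤ μ (⋃ k ∈ Finset.range K, ⋃ A ∈ Finset.powersetCard (k+1) (Finset.univ : Finset (Fin K)),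
          ⋂ i ∈ A, {ω | P i ω ≤ ((k:ℝ)+1) * α / K}) := measure_mono hsub
    _ ≤ ∑ k ∈ Finset.range K, μ (⋃ A ∈ Finset.powersetCard (k+1) (Finset.univ : Finset (Fin K)),
          ⋂ i ∈ A, {ω | P i ω ≤ ((k:ℝ)+1) * α / K}) := measure_biUnion_finset_le _ _
    _ ≤ ∑ k ∈ Finset.range K, ∑ A ∈ Finset.powersetCard (k+1) (Finset.univ : Finset (Fin K)),
          μ (⋂ i ∈ A, {ω | P i ω ≤ ((k:ℝ)+1) * α / K}) :=
        Finset.sum_le_sum fun k _ => measure_biUnion_finset_le _ _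
    _ ≤ ∑ k ∈ Finset.range K, ∑ A ∈ Finset.powersetCard (k+1) (Finset.univ : Finset (Fin K)),
          ENNReal.ofReal ((((k:ℝ)+1) * α / K)^(k+1)) := by
        refine Finset.sum_le_sum fun k hk => Finset.sum_le_sum fun A hA => ?_
        obtain ⟨-, hAcard⟩ := Finset.mem_powersetCard.mp hA
        have hx := hx01 k hk
        calc μ (⋂ i ∈ A, {ω | P i ω ≤ ((k:ℝ)+1) * α / K})
            ≤ ∏ i ∈ A, μ {ω | P i ω ≤ ((k:ℝ)+1) * α / K} := hwnd A _
          _ = ∏ i ∈ A, ENNReal.ofReal (((k:ℝ)+1) * α / K) :=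
              Finset.prod_congr rfl fun i _ => hunif i _ hx
          _ = ENNReal.ofReal (((k:ℝ)+1) * α / K) ^ (k+1) := by
              rw [Finset.prod_const, hAcard]
          _ = ENNReal.ofReal ((((k:ℝ)+1) * α / K)^(k+1)) := by
              rw [ENNReal.ofReal_pow hx.1]
    _ = ∑ k ∈ Finset.range K,
          (K.choose (k+1) : ENNReal) * ENNReal.ofReal ((((k:ℝ)+1) * α / K)^(k+1)) := by
        refine Finset.sum_congr rfl fun k hk => ?_
        rw [Finset.sum_const, Finset.card_powersetCard, Finset.card_univ, Fintype.card_fin,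
          nsmul_eq_mul]
    _ = ENNReal.ofReal (∑ k ∈ Finset.range K, (K.choose (k+1) : ℝ) * (((k:ℝ)+1) * α / K)^(k+1)) := by
        rw [ENNReal.ofReal_sum_of_nonneg]
        · refine Finset.sum_congr rfl fun k hk => ?_
          rw [ENNReal.ofReal_mul (by positivity), ENNReal.ofReal_natCast]
        · intro k hk
          have hx := hx01 k hk
          positivity
    _ ≤ ENNReal.ofReal (3.4 * α) := ENNReal.ofReal_le_ofReal hreal
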